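/- (Proposition 2.1) Let M ≥ 1 and let a, b ∈ ℂ^M satisfy a_j ≠ b_k for all j, k ∈ {1,…,M}. Let ξ ∈ ℂ^M. Define the M×M Cauchy-type matrix C by C_{jk} = (a_j − b_j)/(a_j − b_k), the diagonal matrix D = diag(exp(ξ₁),…,exp(ξ_M)), and for j ≠ k the numbers f_{jk} = (a_j − a_k)(b_j − b_k)/((a_j − b_k)(b_j − a_k)). Then det(1_M + DC) = Σ_{S ⊆ {1,…,M}} ∏_{j∈S} exp(ξ_j) · ∏_{j,k∈S, j<k} f_{jk}, where the sum is over all subsets S of {1,…,M} (the empty set contributing 1). -/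

import Mathlib

open Matrix Finset

private lemma cauchyC_det (n : ℕ) : ∀ (a b : Fin n → ℂ), (∀ j k, a j ≠ b k) →
    Matrix.det (Matrix.of fun j k : Fin n => (a j - b j) / (a j - b k)) =
      ∏ j : Fin n, ∏ k : Fin n,
        if j < k then ((a j - a k) * (b j - b k)) / ((a j - b k) * (b j - a k)) else 1 := by
  induction n with
  | zero => intro a b hab; simp [Matrix.det_isEmpty]
  | succ n ih =>
    intro a b hab
    set a' : Fin n → ℂ := fun j => a j.castSucc with ha'
    set b' : Fin n → ℂ := fun j => b j.castSucc with hb'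
    have hab' : ∀ j k, a' j ≠ b' k := fun j k => hab _ _
    have hne' : ∀ j k : Fin n, a' j - b' k ≠ 0 := fun j k => sub_ne_zero.mpr (hab' j k)
    set al := a (Fin.last n) with hal
    set bl := b (Fin.last n) with hbl
    have hne1 : ∀ j : Fin n, a' j - bl ≠ 0 := fun j => sub_ne_zero.mpr (hab _ _)
    have hne2 : ∀ k : Fin n, al - b' k ≠ 0 := fun k => sub_ne_zero.mpr (hab _ _)
    have hne2' : ∀ k : Fin n, b' k - al ≠ 0 := by
      intro k; rw [sub_ne_zero]; exact fun h => (hab (Fin.last n) k.castSucc) h.symm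
    have hne3 : al - bl ≠ 0 := sub_ne_zero.mpr (hab _ _)
    set d : Fin n → ℂ := fun j => (al - a' j) / (a' j - bl) with hd
    set ev : Fin n → ℂ := fun k => (b' k - bl) / (al - b' k) with hev
    have hblock :
        (Matrix.of fun j k : Fin (n+1) => (a j - b j) / (a j - b k)).submatrix
            finSumFinEquiv finSumFinEquiv =
          Matrix.fromBlocks
            (Matrix.of fun j k : Fin n => (a' j - b' j) / (a' j - b' k))
            (Matrix.of fun (j : Fin n) (_ : Fin 1) => (a' j - b' j) / (a' j - bl))
            (Matrix.of fun (_ : Fin 1) (k : Fin n) => (al - bl) / (al - b' k))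
            (1 : Matrix (Fin 1) (Fin 1) ℂ) := by
      have hlast : ∀ i : Fin 1, Fin.natAdd n i = Fin.last n := by
        intro i; ext; simp [Fin.val_eq_zero i]
      have hcast : ∀ i : Fin n, Fin.castAdd 1 i = i.castSucc := fun i => rfl
      ext i j
      cases i with
      | inl i =>
        cases j with
        | inl j => simp [ha', hb', hcast]
        | inr j => simp [hlast, ha', hb', hbl, hcast]
      | inr i =>
        cases j with
        | inl j => simp [hlast, hal, hbl, ha', hb', hcast]
        | inr j =>
          simp [hlast, hal, hbl, Subsingleton.elim i j, Matrix.one_apply, div_self hne3]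
          exact sub_ne_zero.mpr (hab _ _)
    have hdet1 :
        Matrix.det (Matrix.of fun j k : Fin (n+1) => (a j - b j) / (a j - b k)) =
          Matrix.det
            ((Matrix.of fun j k : Fin n => (a' j - b' j) / (a' j - b' k)) -
              (Matrix.of fun (j : Fin n) (_ : Fin 1) => (a' j - b' j) / (a' j - bl)) *
              (Matrix.of fun (_ : Fin 1) (k : Fin n) => (al - bl) / (al - b' k))) := by
      rw [← Matrix.det_submatrix_equiv_self finSumFinEquiv, hblock,
        Matrix.det_fromBlocks_one₂₂]
    have hschur :
        (Matrix.of fun j k : Fin n => (a' j - b' j) / (a' j - b' k)) -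
            (Matrix.of fun (j : Fin n) (_ : Fin 1) => (a' j - b' j) / (a' j - bl)) *
            (Matrix.of fun (_ : Fin 1) (k : Fin n) => (al - bl) / (al - b' k)) =
          Matrix.of (fun j k : Fin n => d j * ((a' j - b' j) / (a' j - b' k)) * ev k) := by
      ext j k
      simp only [Matrix.sub_apply, Matrix.mul_apply, Fin.sum_univ_one, Matrix.of_apply,
        hd, hev]
      field_simp [hne' j k, hne1 j, hne2 k]
      ring
    have hfactor :
        Matrix.of (fun j k : Fin n => d j * ((a' j - b' j) / (a' j - b' k)) * ev k) =
          Matrix.diagonal d * (Matrix.of fun j k : Fin n => (a' j - b' j) / (a' j - b' k)) *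
            Matrix.diagonal ev := by
      ext j k
      simp [Matrix.mul_diagonal, Matrix.diagonal_mul]
    rw [hdet1, hschur, hfactor, Matrix.det_mul, Matrix.det_mul, Matrix.det_diagonal,
      Matrix.det_diagonal, ih a' b' hab']
    -- product algebra
    rw [Fin.prod_univ_castSucc (f := fun j : Fin (n+1) => ∏ k : Fin (n+1),
      if j < k then ((a j - a k) * (b j - b k)) / ((a j - b k) * (b j - a k)) else 1)]
    have hlast1 : (∏ k : Fin (n+1), if Fin.last n < k then
        ((a (Fin.last n) - a k) * (b (Fin.last n) - b k)) /
          ((a (Fin.last n) - b k) * (b (Fin.last n) - a k)) else 1) = 1 := by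
      apply Finset.prod_eq_one
      intro k _
      rw [if_neg (Fin.le_last k).not_gt]
    rw [hlast1, mul_one]
    have hinner : ∀ j : Fin n, (∏ k : Fin (n+1), if j.castSucc < k then
        ((a j.castSucc - a k) * (b j.castSucc - b k)) /
          ((a j.castSucc - b k) * (b j.castSucc - a k)) else 1) =
        (∏ k : Fin n, if j < k then
          ((a' j - a' k) * (b' j - b' k)) / ((a' j - b' k) * (b' j - a' k)) else 1) *
          (((a' j - al) * (b' j - bl)) / ((a' j - bl) * (b' j - al))) := by
      intro j
      rw [Fin.prod_univ_castSucc]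
      simp [Fin.castSucc_lt_castSucc_iff, Fin.castSucc_lt_last, ha', hb', hal, hbl]
    simp only [hinner]
    rw [Finset.prod_mul_distrib]
    have hde : ∀ j : Fin n, d j * ev j =
        ((a' j - al) * (b' j - bl)) / ((a' j - bl) * (b' j - al)) := by
      intro j
      rw [hd, hev]
      field_simp [hne1 j, hne2 j, hne2' j]
      ring
    calc (∏ j, d j) * (∏ j : Fin n, ∏ k : Fin n, if j < k then
          ((a' j - a' k) * (b' j - b' k)) / ((a' j - b' k) * (b' j - a' k)) else 1) *
          (∏ j, ev j)
        = (∏ j : Fin n, ∏ k : Fin n, if j < k then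
          ((a' j - a' k) * (b' j - b' k)) / ((a' j - b' k) * (b' j - a' k)) else 1) *
          ∏ j, (d j * ev j) := by rw [Finset.prod_mul_distrib]; ring
      _ = _ := by rw [Finset.prod_congr rfl (fun j _ => hde j)]


private lemma det_piecewise_one {m : ℕ} (A : Matrix (Fin m) (Fin m) ℂ) (s : Finset (Fin m)) :
    Matrix.det (s.piecewise A (1 : Matrix (Fin m) (Fin m) ℂ)) =
      Matrix.det (A.submatrix (fun i : {x // x ∈ s} => (i : Fin m))
        (fun i : {x // x ∈ s} => (i : Fin m))) := by
  rw [← Matrix.det_submatrix_equiv_self (Equiv.sumCompl (· ∈ s)) (s.piecewise A (1 : Matrix (Fin m) (Fin m) ℂ))]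
  have hblock : Matrix.submatrix (s.piecewise A (1 : Matrix (Fin m) (Fin m) ℂ))
      (Equiv.sumCompl (· ∈ s)) (Equiv.sumCompl (· ∈ s)) =
      Matrix.fromBlocks
        (A.submatrix (fun i : {x // x ∈ s} => (i : Fin m)) (fun i : {x // x ∈ s} => (i : Fin m)))
        (A.submatrix (fun i : {x // x ∈ s} => (i : Fin m)) (fun i : {x // ¬ x ∈ s} => (i : Fin m)))
        0 (1 : Matrix {x // ¬ x ∈ s} {x // ¬ x ∈ s} ℂ) := by
    ext i j
    cases i with
    | inl i =>
      cases j with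
      | inl j =>
        simp only [Matrix.submatrix_apply, Matrix.submatrix, Matrix.of_apply, Equiv.sumCompl_apply_inl,
          Matrix.fromBlocks_apply₁₁, Finset.piecewise_eq_of_mem _ _ _ i.2]
        exact congrFun (Finset.piecewise_eq_of_mem _ _ _ i.2) _
      | inr j =>
        simp only [Matrix.submatrix_apply, Matrix.submatrix, Matrix.of_apply, Equiv.sumCompl_apply_inl, Equiv.sumCompl_apply_inr,
          Matrix.fromBlocks_apply₁₂, Finset.piecewise_eq_of_mem _ _ _ i.2]
        exact congrFun (Finset.piecewise_eq_of_mem _ _ _ i.2) _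
    | inr i =>
      cases j with
      | inl j =>
        have h1 : (i : Fin m) ≠ (j : Fin m) := fun h => i.2 (h ▸ j.2)
        simp only [Matrix.submatrix_apply, Matrix.submatrix, Matrix.of_apply, Equiv.sumCompl_apply_inl, Equiv.sumCompl_apply_inr,
          Matrix.fromBlocks_apply₂₁, Finset.piecewise_eq_of_notMem _ _ _ i.2,
          Matrix.zero_apply]
        exact (congrFun (Finset.piecewise_eq_of_notMem _ _ _ i.2) _).trans (Matrix.one_apply_ne h1)
      | inr j =>
        simp only [Matrix.submatrix_apply, Matrix.submatrix, Matrix.of_apply, Equiv.sumCompl_apply_inr,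
          Matrix.fromBlocks_apply₂₂, Finset.piecewise_eq_of_notMem _ _ _ i.2]
        refine (congrFun (Finset.piecewise_eq_of_notMem _ _ _ i.2) _).trans ?_
        simp [Matrix.one_apply, Subtype.val_inj]
  rw [hblock, Matrix.det_fromBlocks_zero₂₁, Matrix.det_one, mul_one]

private lemma minor_eval (M : ℕ) (a b ξ : Fin M → ℂ) (hab : ∀ j k, a j ≠ b k) (s : Finset (Fin M)) :
    Matrix.det
      (((Matrix.diagonal fun j => Complex.exp (ξ j)) *
        Matrix.of (fun j k : Fin M => (a j - b j) / (a j - b k))).submatrix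
          (fun i : {x // x ∈ s} => (i : Fin M)) (fun i : {x // x ∈ s} => (i : Fin M)))
      = (∏ j ∈ s, Complex.exp (ξ j)) *
          ∏ j ∈ s, ∏ k ∈ s.filter (fun k => j < k),
            ((a j - a k) * (b j - b k)) / ((a j - b k) * (b j - a k)) := by
  set e := (s.orderIsoOfFin rfl) with he
  set g : Fin s.card → Fin M := fun i => ((e i : {x // x ∈ s}) : Fin M) with hg
  have hgab : ∀ j k, a (g j) ≠ b (g k) := fun j k => hab _ _
  rw [← Matrix.det_submatrix_equiv_self e.toEquiv, Matrix.submatrix_submatrix]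
  have hmat : ((Matrix.diagonal fun j => Complex.exp (ξ j)) *
        Matrix.of (fun j k : Fin M => (a j - b j) / (a j - b k))).submatrix
        ((fun i : {x // x ∈ s} => (i : Fin M)) ∘ e.toEquiv)
        ((fun i : {x // x ∈ s} => (i : Fin M)) ∘ e.toEquiv) =
      Matrix.diagonal (fun i : Fin s.card => Complex.exp (ξ (g i))) *
        Matrix.of (fun i j : Fin s.card => (a (g i) - b (g i)) / (a (g i) - b (g j))) := by
    ext i j
    simp [Matrix.submatrix_apply, Matrix.diagonal_mul, hg]
  rw [hmat, Matrix.det_mul, Matrix.det_diagonal, cauchyC_det _ (fun i => a (g i)) (fun i => b (g i)) hgab]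
  congr 1
  · rw [← Finset.prod_coe_sort s (fun j => Complex.exp (ξ j))]
    exact Equiv.prod_comp e.toEquiv (fun x : {x // x ∈ s} => Complex.exp (ξ (x : Fin M)))
  · have hlt : ∀ i j : Fin s.card, g i < g j ↔ i < j := by
      intro i j
      rw [hg]
      exact Iff.trans Subtype.coe_lt_coe e.lt_iff_lt
    calc ∏ i : Fin s.card, ∏ j : Fin s.card,
          (if i < j then ((a (g i) - a (g j)) * (b (g i) - b (g j))) /
            ((a (g i) - b (g j)) * (b (g i) - a (g j))) else 1)
        = ∏ i : Fin s.card, ∏ j : Fin s.card,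
          (if g i < g j then ((a (g i) - a (g j)) * (b (g i) - b (g j))) /
            ((a (g i) - b (g j)) * (b (g i) - a (g j))) else 1) := by
          exact Finset.prod_congr rfl fun i _ => Finset.prod_congr rfl fun j _ =>
            if_congr (hlt i j).symm rfl rfl
      _ = ∏ x : {x // x ∈ s}, ∏ y : {x // x ∈ s},
          (if (x : Fin M) < y then ((a x - a y) * (b x - b y)) /
            ((a x - b y) * (b x - a y)) else 1) := by
          rw [← Equiv.prod_comp e.toEquiv (fun x : {x // x ∈ s} => ∏ y : {x // x ∈ s},
            (if (x : Fin M) < y then ((a x - a y) * (b x - b y)) /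
              ((a x - b y) * (b x - a y)) else 1))]
          exact Finset.prod_congr rfl fun i _ => Equiv.prod_comp e.toEquiv
            (fun y : {x // x ∈ s} => (if (g i : Fin M) < y then ((a (g i) - a y) * (b (g i) - b y)) /
              ((a (g i) - b y) * (b (g i) - a y)) else 1))
      _ = ∏ j ∈ s, ∏ k ∈ s,
          (if j < k then ((a j - a k) * (b j - b k)) / ((a j - b k) * (b j - a k)) else 1) := by
          rw [← Finset.prod_coe_sort s (fun j => ∏ k ∈ s,
            (if j < k then ((a j - a k) * (b j - b k)) / ((a j - b k) * (b j - a k)) else 1))]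
          exact Finset.prod_congr rfl fun x _ => Finset.prod_coe_sort s
            (fun k => (if (x : Fin M) < k then ((a x - a k) * (b x - b k)) /
              ((a x - b k) * (b x - a k)) else 1))
      _ = ∏ j ∈ s, ∏ k ∈ s.filter (fun k => j < k),
            ((a j - a k) * (b j - b k)) / ((a j - b k) * (b j - a k)) := by
          refine Finset.prod_congr rfl fun j _ => ?_
          rw [Finset.prod_filter]


/-- Proposition 2.1: principal minor expansion of det(1 + DC) for a Cauchy-type matrix C
and diagonal D = diag(exp ξ), in terms of the interaction coefficients f_{jk} . -/
theorem cauchy_tau_det_expansion (M : ℕ) (hM : 1 ≤ M) (a b ξ : Fin M → ℂ)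
    (hab : ∀ j k, a j ≠ b k) :
    Matrix.det
        (1 + (Matrix.diagonal fun j => Complex.exp (ξ j)) *
          Matrix.of (fun j k : Fin M => (a j - b j) / (a j - b k)))
      = ∑ S : Finset (Fin M),
          (∏ j ∈ S, Complex.exp (ξ j)) *
            ∏ j ∈ S, ∏ k ∈ S.filter (fun k => j < k),
              ((a j - a k) * (b j - b k)) / ((a j - b k) * (b j - a k)) := by
  have h1 : Matrix.det ((Matrix.diagonal fun j => Complex.exp (ξ j)) *
        Matrix.of (fun j k : Fin M => (a j - b j) / (a j - b k)) +
        (1 : Matrix (Fin M) (Fin M) ℂ)) = ∑ s : Finset (Fin M),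
      Matrix.det (s.piecewise ((Matrix.diagonal fun j => Complex.exp (ξ j)) *
        Matrix.of (fun j k : Fin M => (a j - b j) / (a j - b k)))
        (1 : Matrix (Fin M) (Fin M) ℂ)) :=
    Matrix.detRowAlternating.toMultilinearMap.map_add_univ _ (1 : Matrix (Fin M) (Fin M) ℂ)
  rw [add_comm, h1]
  refine Finset.sum_congr rfl fun s _ => ?_
  rw [det_piecewise_one, minor_eval M a b ξ hab s]
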